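/- For l > 0 and λ ∈ ℝ \ {0}, define F(k) := 1 − ((λ − ik)/(λ + ik))² e^{2ikl} for k in a neighbourhood of 0 in ℂ. Then the order of vanishing of F at k = 0 equals 3 if l = 2/λ, and equals 1 otherwise. -/

import Mathlib

/-- The secular function F(k) = 1 − ((λ − ik)/(λ + ik))² e^{2ikl}. -/
noncomputable def secF (l lam : ℝ) (k : ℂ) : ℂ :=
  1 - (((lam : ℂ) - Complex.I * k) / ((lam : ℂ) + Complex.I * k)) ^ 2 *
    Complex.exp (2 * Complex.I * k * (l : ℂ))

noncomputable def QE (l lam : ℝ) (k : ℂ) : ℂ :=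
  (((lam : ℂ) - Complex.I * k) / ((lam : ℂ) + Complex.I * k)) ^ 2 *
    Complex.exp (2 * Complex.I * k * (l : ℂ))

noncomputable def Pf (l lam : ℝ) (k : ℂ) : ℂ :=
  2*Complex.I*l - 4*Complex.I*lam / (((lam:ℂ) - Complex.I*k) * ((lam:ℂ) + Complex.I*k))

noncomputable def P1f (lam : ℝ) (k : ℂ) : ℂ :=
  8*Complex.I*lam*k / ((((lam:ℂ) - Complex.I*k) * ((lam:ℂ) + Complex.I*k))^2)

noncomputable def G1f (l lam : ℝ) (k : ℂ) : ℂ := -(QE l lam k * Pf l lam k)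

noncomputable def G2f (l lam : ℝ) (k : ℂ) : ℂ :=
  -(QE l lam k * (Pf l lam k ^ 2 + P1f lam k))

lemma hasDerivAt_QE (l lam : ℝ) (k : ℂ)
    (hA : ((lam:ℂ) - Complex.I*k) ≠ 0) (hB : ((lam:ℂ) + Complex.I*k) ≠ 0) :
    HasDerivAt (QE l lam) (QE l lam k * Pf l lam k) k := by
  have hA' : HasDerivAt (fun k : ℂ => (lam:ℂ) - Complex.I*k) (-Complex.I) k := by
    simpa using ((hasDerivAt_id k).const_mul Complex.I).const_sub (lam:ℂ)
  have hB' : HasDerivAt (fun k : ℂ => (lam:ℂ) + Complex.I*k) Complex.I k := by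
    simpa using ((hasDerivAt_id k).const_mul Complex.I).const_add (lam:ℂ)
  have hq := hA'.div hB' hB
  have hq2 := hq.pow 2
  have hlin : HasDerivAt (fun k : ℂ => 2*Complex.I*k*(l:ℂ)) (2*Complex.I*(l:ℂ)) k := by
    simpa using ((hasDerivAt_id k).const_mul (2*Complex.I)).mul_const (l:ℂ)
  have h := hq2.mul hlin.cexp
  refine h.congr_deriv ?_
  symm
  unfold QE Pf
  simp only [Pi.div_apply, Pi.pow_apply]
  norm_num
  field_simp
  ring

lemma hasDerivAt_AB (lam : ℝ) (k : ℂ) :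
    HasDerivAt (fun k : ℂ => ((lam:ℂ) - Complex.I*k) * ((lam:ℂ) + Complex.I*k)) (2*k) k := by
  have hA' : HasDerivAt (fun k : ℂ => (lam:ℂ) - Complex.I*k) (-Complex.I) k := by
    simpa using ((hasDerivAt_id k).const_mul Complex.I).const_sub (lam:ℂ)
  have hB' : HasDerivAt (fun k : ℂ => (lam:ℂ) + Complex.I*k) Complex.I k := by
    simpa using ((hasDerivAt_id k).const_mul Complex.I).const_add (lam:ℂ)
  have h := hA'.mul hB'
  refine h.congr_deriv ?_
  symm
  linear_combination (2*k) * Complex.I_sq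

lemma hasDerivAt_Pf (l lam : ℝ) (k : ℂ)
    (hA : ((lam:ℂ) - Complex.I*k) ≠ 0) (hB : ((lam:ℂ) + Complex.I*k) ≠ 0) :
    HasDerivAt (Pf l lam) (P1f lam k) k := by
  have hAB := (hasDerivAt_AB lam k).inv (mul_ne_zero hA hB)
  have h := (hAB.const_mul (4*Complex.I*lam)).const_sub (2*Complex.I*(l:ℂ))
  have hfun : Pf l lam = fun k : ℂ => 2*Complex.I*(l:ℂ) -
      4*Complex.I*lam * (((lam:ℂ) - Complex.I*k) * ((lam:ℂ) + Complex.I*k))⁻¹ := by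
    funext k; unfold Pf; ring
  rw [hfun]
  refine h.congr_deriv ?_
  symm
  unfold P1f
  field_simp
  ring

lemma hasDerivAt_secF (l lam : ℝ) (k : ℂ)
    (hA : ((lam:ℂ) - Complex.I*k) ≠ 0) (hB : ((lam:ℂ) + Complex.I*k) ≠ 0) :
    HasDerivAt (secF l lam) (G1f l lam k) k := by
  have h := (hasDerivAt_QE l lam k hA hB).const_sub 1
  exact h

lemma hasDerivAt_G1f (l lam : ℝ) (k : ℂ)
    (hA : ((lam:ℂ) - Complex.I*k) ≠ 0) (hB : ((lam:ℂ) + Complex.I*k) ≠ 0) :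
    HasDerivAt (G1f l lam) (G2f l lam k) k := by
  have h := ((hasDerivAt_QE l lam k hA hB).mul (hasDerivAt_Pf l lam k hA hB)).neg
  refine h.congr_deriv ?_
  symm
  unfold G2f
  ring

-- derivative of P1f at 0
lemma hasDerivAt_P1f_zero (lam : ℝ) (hlam : lam ≠ 0) :
    HasDerivAt (P1f lam) (8*Complex.I/(lam:ℂ)^3) 0 := by
  have hlamC : (lam:ℂ) ≠ 0 := Complex.ofReal_ne_zero.mpr hlam
  have hnum : HasDerivAt (fun k : ℂ => 8*Complex.I*(lam:ℂ)*k) (8*Complex.I*(lam:ℂ)) 0 := by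
    simpa using (hasDerivAt_id (0:ℂ)).const_mul (8*Complex.I*(lam:ℂ))
  have hden := (hasDerivAt_AB lam 0).pow 2
  have hden0 : ((((lam:ℂ) - Complex.I*0) * ((lam:ℂ) + Complex.I*0))^2) ≠ 0 := by
    simp [hlamC, pow_ne_zero]
  have h := hnum.div hden hden0
  have hfun : P1f lam = fun k : ℂ => 8*Complex.I*(lam:ℂ)*k /
      ((((lam:ℂ) - Complex.I*k) * ((lam:ℂ) + Complex.I*k))^2) := by
    funext k; rfl
  rw [hfun]
  refine h.congr_deriv ?_
  symm
  simp only [Pi.pow_apply]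
  field_simp
  norm_num
  field_simp

-- derivative of G2f at 0 (for the case l = 2/lam where Pf 0 = 0)
lemma QE_zero (l lam : ℝ) (hlam : lam ≠ 0) : QE l lam 0 = 1 := by
  have hlamC : (lam:ℂ) ≠ 0 := Complex.ofReal_ne_zero.mpr hlam
  simp [QE, div_self hlamC]

lemma P1f_zero (lam : ℝ) : P1f lam 0 = 0 := by simp [P1f]

lemma Pf_zero (l lam : ℝ) (hlam : lam ≠ 0) :
    Pf l lam 0 = 2*Complex.I*l - 4*Complex.I/(lam:ℂ) := by
  have hlamC : (lam:ℂ) ≠ 0 := Complex.ofReal_ne_zero.mpr hlam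
  unfold Pf
  simp only [mul_zero, sub_zero, add_zero]
  field_simp

theorem stmt12 (l lam : ℝ) (hl : 0 < l) (hlam : lam ≠ 0) :
    (l = 2 / lam →
      (secF l lam 0 = 0 ∧ deriv (secF l lam) 0 = 0 ∧
        iteratedDeriv 2 (secF l lam) 0 = 0 ∧ iteratedDeriv 3 (secF l lam) 0 ≠ 0)) ∧
    (l ≠ 2 / lam → (secF l lam 0 = 0 ∧ deriv (secF l lam) 0 ≠ 0)) := by
  have hlamC : (lam:ℂ) ≠ 0 := Complex.ofReal_ne_zero.mpr hlam
  -- F(0) = 0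
  have hF0 : secF l lam 0 = 0 := by
    simp [secF, div_self hlamC]
  -- the open set U
  set U : Set ℂ := {k | ((lam:ℂ) - Complex.I*k) ≠ 0 ∧ ((lam:ℂ) + Complex.I*k) ≠ 0} with hUdef
  have hUopen : IsOpen U := by
    have h1 : Continuous fun k : ℂ => (lam:ℂ) - Complex.I*k := by continuity
    have h2 : Continuous fun k : ℂ => (lam:ℂ) + Complex.I*k := by continuity
    exact (isOpen_compl_singleton.preimage h1).inter (isOpen_compl_singleton.preimage h2)
  have h0U : (0:ℂ) ∈ U := by simp [hUdef, hlamC]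
  have hUnhds : U ∈ nhds (0:ℂ) := hUopen.mem_nhds h0U
  -- deriv secF equals G1f on U
  have hset1 : Set.EqOn (deriv (secF l lam)) (G1f l lam) U := fun k hk =>
    (hasDerivAt_secF l lam k hk.1 hk.2).deriv
  have heq1 : deriv (secF l lam) =ᶠ[nhds 0] G1f l lam :=
    Filter.eventuallyEq_of_mem hUnhds hset1
  -- deriv (deriv secF) equals G2f on U
  have hset2 : Set.EqOn (deriv (deriv (secF l lam))) (G2f l lam) U := by
    intro k hk
    have e1 : deriv (secF l lam) =ᶠ[nhds k] G1f l lam :=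
      Filter.eventuallyEq_of_mem (hUopen.mem_nhds hk) hset1
    rw [e1.deriv_eq, (hasDerivAt_G1f l lam k hk.1 hk.2).deriv]
  have heq2 : deriv (deriv (secF l lam)) =ᶠ[nhds 0] G2f l lam :=
    Filter.eventuallyEq_of_mem hUnhds hset2
  -- value of deriv secF at 0
  have hd1 : deriv (secF l lam) 0 = -(2*Complex.I*l - 4*Complex.I/(lam:ℂ)) := by
    rw [hset1 h0U]
    unfold G1f
    rw [QE_zero l lam hlam, Pf_zero l lam hlam, one_mul]
  constructor
  · intro hle
    have hPf0 : Pf l lam 0 = 0 := by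
      rw [Pf_zero l lam hlam, hle]
      push_cast
      field_simp
      ring
    refine ⟨hF0, ?_, ?_, ?_⟩
    · rw [hd1, hle]
      push_cast
      field_simp
      ring
    · -- second derivative
      rw [iteratedDeriv_succ, iteratedDeriv_one, hset2 h0U]
      unfold G2f
      rw [QE_zero l lam hlam, hPf0, P1f_zero, one_mul]
      ring
    · -- third derivative
      rw [iteratedDeriv_succ, iteratedDeriv_succ, iteratedDeriv_one, heq2.deriv_eq]
      -- compute HasDerivAt G2f at 0
      have hQE0 := hasDerivAt_QE l lam 0 h0U.1 h0U.2
      have hP0 := hasDerivAt_Pf l lam 0 h0U.1 h0U.2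
      have hsum := (hP0.pow 2).add (hasDerivAt_P1f_zero lam hlam)
      have h : HasDerivAt (G2f l lam)
          (-(QE l lam 0 * Pf l lam 0 * (Pf l lam 0 ^ 2 + P1f lam 0) +
            QE l lam 0 * ((2:ℕ) * Pf l lam 0 ^ (2-1) * P1f lam 0 + 8*Complex.I/(lam:ℂ)^3))) 0 :=
        (hQE0.mul hsum).neg
      rw [h.deriv]
      have hval : -(QE l lam 0 * Pf l lam 0 * (Pf l lam 0 ^ 2 + P1f lam 0) +
            QE l lam 0 * ((2:ℕ) * Pf l lam 0 ^ (2-1) * P1f lam 0 + 8*Complex.I/(lam:ℂ)^3)) =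
          -(8*Complex.I/(lam:ℂ)^3) := by
        rw [QE_zero l lam hlam, hPf0, P1f_zero]; ring
      rw [hval]
      simp [Complex.I_ne_zero, hlamC, div_eq_zero_iff, pow_ne_zero]
  · intro hne
    refine ⟨hF0, ?_⟩
    rw [hd1]
    intro hcon
    have h0 : (2:ℂ)*Complex.I*l - 4*Complex.I/(lam:ℂ) = 0 := neg_eq_zero.mp hcon
    have h2 : (l:ℝ)*lam = 2 := by
      have h2C : (l:ℂ)*lam = 2 := by
        have h2I : (2*Complex.I : ℂ) ≠ 0 := by simp [Complex.I_ne_zero]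
        apply mul_left_cancel₀ h2I
        field_simp at h0
        linear_combination h0
      exact_mod_cast h2C
    exact hne ((eq_div_iff hlam).mpr h2)
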